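/- arXiv:1001.0513 — 3 statements merged into one kernel-verified Lean document; each statement's English description precedes it below -/
import Mathlib

section
/- Let H1, H2 ∈ (0,1) and t, t', s, s' ≥ 0. Set A = t^{2H1} + t'^{2H1} − |t − t'|^{2H1} and B = s^{2H2} + s'^{2H2} − |s − s'|^{2H2}. Then (t^{2H1} + s^{2H2})·(t'^{2H1} + s'^{2H2}) − (1/4)(A + B)² ≥ φ_{H1}(t, t') + φ_{H2}(s, s'). -/
open scoped NNReal


/-- `φ_H(u,v) := u^{2H} v^{2H} - (1/4)(u^{2H} + v^{2H} - |u-v|^{2H})²`. -/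
noncomputable def phi (H u v : ℝ) : ℝ :=
  u ^ (2 * H) * v ^ (2 * H) - 1/4 * (u ^ (2 * H) + v ^ (2 * H) - |u - v| ^ (2 * H)) ^ 2

/-- Subadditivity of `x ↦ x^p` on nonnegative reals for `0 ≤ p ≤ 1`. -/
lemma rpow_add_le_add_rpow_real {p x y : ℝ} (hx : 0 ≤ x) (hy : 0 ≤ y)
    (hp : 0 ≤ p) (hp1 : p ≤ 1) : (x + y) ^ p ≤ x ^ p + y ^ p := by
  lift x to ℝ≥0 using hx
  lift y to ℝ≥0 using hy
  have := NNReal.rpow_add_le_add_rpow x y hp hp1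
  exact_mod_cast this

/-- `(u^H - v^H)^2 ≤ |u - v|^(2H)` for `0 < H ≤ 1`, `u, v ≥ 0`. -/
lemma key_sq (H : ℝ) (hH : 0 < H) (hH1 : H ≤ 1) {u v : ℝ} (hu : 0 ≤ u) (hv : 0 ≤ v) :
    (u ^ H - v ^ H) ^ 2 ≤ |u - v| ^ (2 * H) := by
  wlog h : v ≤ u generalizing u v
  · have := this hv hu (le_of_not_ge h)
    rw [abs_sub_comm] at this
    nlinarith [this]
  have habs : |u - v| = u - v := abs_of_nonneg (by linarith)
  rw [habs]
  have hsub : 0 ≤ u - v := by linarith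
  have h1 : u ^ H ≤ (u - v) ^ H + v ^ H := by
    have := rpow_add_le_add_rpow_real hsub hv hH.le hH1
    rwa [sub_add_cancel] at this
  have h2 : v ^ H ≤ u ^ H := Real.rpow_le_rpow hv h hH.le
  have h3 : u ^ H - v ^ H ≤ (u - v) ^ H := by linarith
  have h4 : 0 ≤ u ^ H - v ^ H := by linarith
  have h5 : (u ^ H - v ^ H) ^ 2 ≤ ((u - v) ^ H) ^ 2 := by nlinarith
  calc (u ^ H - v ^ H) ^ 2 ≤ ((u - v) ^ H) ^ 2 := h5
    _ = (u - v) ^ (2 * H) := by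
        rw [← Real.rpow_natCast ((u - v) ^ H) 2, ← Real.rpow_mul hsub]
        norm_num [mul_comm]

/-- Nonnegativity of the fBm covariance kernel. -/
lemma cov_nonneg (H : ℝ) (hH : 0 < H) {u v : ℝ} (hu : 0 ≤ u) (hv : 0 ≤ v) :
    0 ≤ u ^ (2 * H) + v ^ (2 * H) - |u - v| ^ (2 * H) := by
  wlog h : v ≤ u generalizing u v
  · have := this hv hu (le_of_not_ge h)
    rw [abs_sub_comm] at this
    linarith
  have habs : |u - v| = u - v := abs_of_nonneg (by linarith)
  rw [habs]
  have : (u - v) ^ (2 * H) ≤ u ^ (2 * H) :=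
    Real.rpow_le_rpow (by linarith) (by linarith) (by linarith)
  have hv2 : 0 ≤ v ^ (2 * H) := Real.rpow_nonneg hv _
  linarith

/-- With `A = t^{2H1} + t'^{2H1} - |t-t'|^{2H1}` and `B = s^{2H2} + s'^{2H2} - |s-s'|^{2H2}`,
`(t^{2H1}+s^{2H2})(t'^{2H1}+s'^{2H2}) - (1/4)(A+B)² ≥ φ_{H1}(t,t') + φ_{H2}(s,s')`. -/
theorem covariance_lower_bound (H1 H2 : ℝ) (h1 : H1 ∈ Set.Ioo (0:ℝ) 1)
    (h2 : H2 ∈ Set.Ioo (0:ℝ) 1)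
    (t t' s s' : ℝ) (ht : 0 ≤ t) (ht' : 0 ≤ t') (hs : 0 ≤ s) (hs' : 0 ≤ s') :
    phi H1 t t' + phi H2 s s' ≤
      (t ^ (2 * H1) + s ^ (2 * H2)) * (t' ^ (2 * H1) + s' ^ (2 * H2)) -
        1/4 * ((t ^ (2 * H1) + t' ^ (2 * H1) - |t - t'| ^ (2 * H1)) +
                (s ^ (2 * H2) + s' ^ (2 * H2) - |s - s'| ^ (2 * H2))) ^ 2 := by
  obtain ⟨hH1, hH1'⟩ := h1
  obtain ⟨hH2, hH2'⟩ := h2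
  have sq2 : ∀ (H x : ℝ), 0 ≤ x → x ^ (2 * H) = (x ^ H) ^ 2 := by
    intro H x hx
    rw [← Real.rpow_natCast (x ^ H) 2, ← Real.rpow_mul hx]
    norm_num [mul_comm]
  set A := t ^ (2 * H1) + t' ^ (2 * H1) - |t - t'| ^ (2 * H1) with hA
  set B := s ^ (2 * H2) + s' ^ (2 * H2) - |s - s'| ^ (2 * H2) with hB
  have hAnn : 0 ≤ A := cov_nonneg H1 hH1 ht ht'
  have hBnn : 0 ≤ B := cov_nonneg H2 hH2 hs hs'
  have hA2 : A ≤ 2 * (t ^ H1 * t' ^ H1) := by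
    have := key_sq H1 hH1 hH1'.le ht ht'
    have e1 := sq2 H1 t ht
    have e2 := sq2 H1 t' ht'
    rw [hA]; nlinarith
  have hB2 : B ≤ 2 * (s ^ H2 * s' ^ H2) := by
    have := key_sq H2 hH2 hH2'.le hs hs'
    have e1 := sq2 H2 s hs
    have e2 := sq2 H2 s' hs'
    rw [hB]; nlinarith
  have et := sq2 H1 t ht
  have et' := sq2 H1 t' ht'
  have es := sq2 H2 s hs
  have es' := sq2 H2 s' hs'
  have hp : 0 ≤ t ^ H1 := Real.rpow_nonneg ht _
  have hp' : 0 ≤ t' ^ H1 := Real.rpow_nonneg ht' _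
  have hq : 0 ≤ s ^ H2 := Real.rpow_nonneg hs _
  have hq' : 0 ≤ s' ^ H2 := Real.rpow_nonneg hs' _
  simp only [phi, ← hA, ← hB]
  rw [et, et', es, es']
  nlinarith [sq_nonneg (t ^ H1 * s' ^ H2 - t' ^ H1 * s ^ H2),
    mul_le_mul hA2 hB2 hBnn (by positivity), mul_nonneg hAnn hBnn,
    mul_nonneg (mul_nonneg hp hp') (mul_nonneg hq hq')]
end

section
/- Let H ∈ (0,1) and R > 0. Then ∫₀^R dx ∫₀^x dy e^{−φ_H(x,y)} ≤ (1/(4H)) · ∫₀^{π/4} (φ_H(cos θ, sin θ))^{−1/(2H)} · γ( 1/(2H), 2^{2H}·R^{4H}·φ_H(cos θ, sin θ) ) dθ. -/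
open MeasureTheory Set Real

/-- The lower incomplete gamma function `γ(α, x) = ∫₀^x e^{-y} y^{α-1} dy`. -/
noncomputable def lowerGamma (α x : ℝ) : ℝ := ∫ y in Ioo (0:ℝ) x, Real.exp (-y) * y ^ (α - 1)

lemma rpow_strict_subadd {H a b : ℝ} (hH0 : 0 < H) (hH1 : H < 1)
    (ha : 0 < a) (hb : 0 < b) : (a + b) ^ H < a ^ H + b ^ H := by
  have sc := Real.strictConcaveOn_rpow hH0 hH1
  have hab : 0 < a + b := by linarith
  have h1 : (b/(a+b)) • ((0:ℝ) ^ H) + (a/(a+b)) • ((a+b) ^ H) <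
      ((b/(a+b)) • (0:ℝ) + (a/(a+b)) • (a+b)) ^ H := by
    apply sc.2 (mem_Ici.2 le_rfl) (mem_Ici.2 hab.le) hab.ne (by positivity) (by positivity)
    field_simp
    try ring
  have h2 : (a/(a+b)) • ((0:ℝ) ^ H) + (b/(a+b)) • ((a+b) ^ H) <
      ((a/(a+b)) • (0:ℝ) + (b/(a+b)) • (a+b)) ^ H := by
    apply sc.2 (mem_Ici.2 le_rfl) (mem_Ici.2 hab.le) hab.ne (by positivity) (by positivity)
    field_simp
    try ring
  rw [Real.zero_rpow hH0.ne'] at h1 h2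
  simp only [smul_eq_mul, mul_zero, zero_add, add_zero] at h1 h2
  rw [show b/(a+b) * (a+b) = b by field_simp] at h2
  rw [show a/(a+b) * (a+b) = a by field_simp] at h1
  have := add_lt_add h1 h2
  have hsum : b/(a+b) * (a+b)^H + a/(a+b) * (a+b)^H = (a+b)^H := by field_simp; ring
  linarith

lemma sq_of_rpow {w H : ℝ} (hw : 0 ≤ w) : w ^ (2*H) = (w ^ H) ^ 2 := by
  rw [show (2*H) = H*2 by ring, Real.rpow_mul hw, Real.rpow_two]

lemma phi_pos {H u v : ℝ} (hH0 : 0 < H) (hH1 : H < 1) (hv : 0 < v) (hvu : v < u) :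
    0 < phi H u v := by
  have hu : 0 < u := hv.trans hvu
  have huv : 0 < u - v := by linarith
  set A := u ^ H with hA
  set B := v ^ H with hB
  set D := (u - v) ^ H with hD
  have hApos : 0 < A := Real.rpow_pos_of_pos hu H
  have hBpos : 0 < B := Real.rpow_pos_of_pos hv H
  have hDpos : 0 < D := Real.rpow_pos_of_pos huv H
  have key1 : A < D + B := by
    have := rpow_strict_subadd hH0 hH1 huv hv
    rwa [sub_add_cancel] at this
  have key2 : D < A := Real.rpow_lt_rpow huv.le (by linarith) hH0
  have key3 : B < A := Real.rpow_lt_rpow hv.le hvu hH0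
  have P : 0 < D^2 - (A-B)^2 := by nlinarith
  have Q : 0 < (A+B)^2 - D^2 := by nlinarith
  have habs : |u - v| = u - v := abs_of_pos huv
  unfold phi
  rw [habs, sq_of_rpow hu.le, sq_of_rpow hv.le, sq_of_rpow huv.le, ← hA, ← hB, ← hD]
  nlinarith [mul_pos P Q]

lemma phi_homog (H : ℝ) {r u v : ℝ} (hr : 0 < r) (hu : 0 ≤ u) (hv : 0 ≤ v) :
    phi H (r*u) (r*v) = r ^ (4*H) * phi H u v := by
  have habs : |r*u - r*v| = r * |u - v| := by rw [← mul_sub, abs_mul, abs_of_pos hr]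
  have h2 : r ^ (2*H) * r ^ (2*H) = r ^ (4*H) := by
    rw [← Real.rpow_add hr]; ring_nf
  unfold phi
  rw [habs, Real.mul_rpow hr.le hu, Real.mul_rpow hr.le hv, Real.mul_rpow hr.le (abs_nonneg _)]
  linear_combination (u ^ (2*H) * v ^ (2*H) - 1/4 * (u ^ (2*H) + v ^ (2*H) - |u-v| ^ (2*H))^2) * h2

lemma lintegral_image_eq_abs_deriv_mul {s : Set ℝ} {f f' : ℝ → ℝ} (hs : MeasurableSet s)
    (hf' : ∀ x ∈ s, HasDerivWithinAt f (f' x) s x) (hf : InjOn f s) (g : ℝ → ENNReal) :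
    ∫⁻ x in f '' s, g x = ∫⁻ x in s, ENNReal.ofReal |f' x| * g (f x) := by
  simpa only [ContinuousLinearMap.det_toSpanSingleton] using
    lintegral_image_eq_lintegral_abs_det_fderiv_mul volume hs
      (fun x hx => (hf' x hx).hasFDerivWithinAt) hf g

lemma radial_integral {H c T : ℝ} (hH0 : 0 < H) (hH1 : H < 1) (hc : 0 < c) (hT : 0 < T) :
    ∫⁻ r in Ioo (0:ℝ) T, ENNReal.ofReal (r * Real.exp (-(r ^ (4*H) * c))) =
      ENNReal.ofReal (1/(4*H) * (c ^ (-(1/(2*H))) * lowerGamma (1/(2*H)) (c * T ^ (4*H)))) := by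
  have h4H : (0:ℝ) < 4*H := by linarith
  set α : ℝ := 1/(2*H) with hα
  have hαpos : 0 < α := by positivity
  set g : ℝ → ℝ := fun r => c * r ^ (4*H) with hg
  set g' : ℝ → ℝ := fun r => c * ((4*H) * r ^ (4*H - 1)) with hg'
  set k : ℝ := 1/(4*H) * c ^ (-α) with hk
  have hknn : 0 ≤ k := by positivity
  set F : ℝ → ENNReal := fun y => ENNReal.ofReal (k * (Real.exp (-y) * y ^ (α - 1))) with hF
  -- derivative
  have hderiv : ∀ r ∈ Ioo (0:ℝ) T, HasDerivWithinAt g (g' r) (Ioo (0:ℝ) T) r := by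
    intro r hr
    exact (((Real.hasDerivAt_rpow_const (p := 4*H) (Or.inl hr.1.ne'))).const_mul c).hasDerivWithinAt
  -- injectivity
  have hmono : StrictMonoOn g (Ioo (0:ℝ) T) := by
    intro r1 h1 r2 h2 h12
    exact mul_lt_mul_of_pos_left (Real.rpow_lt_rpow h1.1.le h12 h4H) hc
  -- image
  have himg : g '' Ioo (0:ℝ) T = Ioo (0:ℝ) (c * T ^ (4*H)) := by
    ext y
    constructor
    · rintro ⟨r, hr, rfl⟩
      exact ⟨mul_pos hc (Real.rpow_pos_of_pos hr.1 _),
        mul_lt_mul_of_pos_left (Real.rpow_lt_rpow hr.1.le hr.2 h4H) hc⟩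
    · rintro ⟨hy0, hyT⟩
      refine ⟨(y/c) ^ (1/(4*H)), ⟨by positivity, ?_⟩, ?_⟩
      · have hdiv : y / c < T ^ (4*H) := (div_lt_iff₀ hc).2 (by linarith [hyT])
        calc (y/c) ^ (1/(4*H)) < (T ^ (4*H)) ^ (1/(4*H)) :=
              Real.rpow_lt_rpow (by positivity) hdiv (by positivity)
          _ = T := by rw [one_div, Real.rpow_rpow_inv hT.le h4H.ne']
      · show c * ((y/c) ^ (1/(4*H))) ^ (4*H) = y
        rw [one_div, Real.rpow_inv_rpow (by positivity) h4H.ne', mul_comm,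
          div_mul_cancel₀ _ hc.ne']
  -- pointwise identity
  have hpt : ∀ r ∈ Ioo (0:ℝ) T,
      ENNReal.ofReal |g' r| * F (g r) = ENNReal.ofReal (r * Real.exp (-(r ^ (4*H) * c))) := by
    intro r hr
    have hr0 : 0 < r := hr.1
    have habs : |g' r| = g' r := abs_of_pos (by positivity)
    rw [habs, hF, ← ENNReal.ofReal_mul (by positivity)]
    congr 1
    have hgr : g r = r ^ (4*H) * c := by rw [hg]; ring
    rw [hgr]
    have hsplit : (r ^ (4*H) * c) ^ (α - 1) = r ^ ((4*H)*(α-1)) * c ^ (α - 1) := by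
      rw [Real.mul_rpow (by positivity) hc.le, ← Real.rpow_mul hr0.le]
    rw [hsplit]
    simp only [hg', hk]
    set X := Real.exp (-(r ^ (4*H) * c)) with hX
    set A := c ^ (-α) with hA
    set B := c ^ (α - 1) with hB
    set C := r ^ (4*H - 1) with hC
    set D := r ^ ((4*H)*(α-1)) with hD
    have e1 : c * (A * B) = 1 := by
      rw [hA, hB, ← Real.rpow_add hc, show -α + (α - 1) = -1 by ring, Real.rpow_neg_one,
        mul_inv_cancel₀ hc.ne']
    have e2 : C * D = r := by
      rw [hC, hD, ← Real.rpow_add hr0, show 4*H - 1 + 4*H*(α-1) = 1 by rw [hα]; field_simp; ring,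
        Real.rpow_one]
    have e3 : (4*H) * (1/(4*H)) = 1 := by field_simp
    linear_combination (c*A*B*C*D*X) * e3 + (C*D*X) * e1 + X * e2
  -- assemble
  calc ∫⁻ r in Ioo (0:ℝ) T, ENNReal.ofReal (r * Real.exp (-(r ^ (4*H) * c)))
      = ∫⁻ r in Ioo (0:ℝ) T, ENNReal.ofReal |g' r| * F (g r) := by
        refine setLIntegral_congr_fun measurableSet_Ioo (fun r hr => ?_)
        exact (hpt r hr).symm
    _ = ∫⁻ y in g '' Ioo (0:ℝ) T, F y :=
        (lintegral_image_eq_abs_deriv_mul measurableSet_Ioo hderiv hmono.injOn F).symm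
    _ = ∫⁻ y in Ioo (0:ℝ) (c * T ^ (4*H)), F y := by rw [himg]
    _ = ENNReal.ofReal k * ∫⁻ y in Ioo (0:ℝ) (c * T ^ (4*H)),
          ENNReal.ofReal (Real.exp (-y) * y ^ (α - 1)) := by
        rw [← lintegral_const_mul' _ _ ENNReal.ofReal_ne_top]
        refine lintegral_congr fun y => ?_
        simp only [hF, ENNReal.ofReal_mul hknn]
    _ = ENNReal.ofReal k * ENNReal.ofReal (lowerGamma α (c * T ^ (4*H))) := by
        congr 1
        rw [lowerGamma]
        rw [ofReal_integral_eq_lintegral_ofReal]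
        · -- Integrable
          have hsub : Ioo (0:ℝ) (c * T ^ (4*H)) ⊆ Ioc (0:ℝ) (c * T ^ (4*H)) := Ioo_subset_Ioc_self
          have hint : IntegrableOn (fun y : ℝ => y ^ (α - 1)) (Ioo (0:ℝ) (c * T ^ (4*H))) := by
            refine IntegrableOn.mono_set ?_ hsub
            have := intervalIntegral.intervalIntegrable_rpow' (a := 0) (b := c * T ^ (4*H))
              (r := α - 1) (by linarith)
            rwa [intervalIntegrable_iff_integrableOn_Ioc_of_le (by positivity)] at this
          refine hint.mono' ?_ ?_
          · -- AEStronglyMeasurable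
            refine ContinuousOn.aestronglyMeasurable ?_ measurableSet_Ioo
            intro y hy
            exact (Real.continuous_exp.comp continuous_neg).continuousWithinAt.mul
              (((Real.continuousAt_rpow_const y (α - 1) (Or.inl hy.1.ne')).continuousWithinAt))
          · refine (ae_restrict_iff' measurableSet_Ioo).2 (ae_of_all _ fun y hy => ?_)
            have h1 : 0 ≤ y ^ (α - 1) := Real.rpow_nonneg hy.1.le _
            have h2 : Real.exp (-y) ≤ 1 := Real.exp_le_one_iff.2 (by linarith [hy.1])
            simp only [Real.norm_eq_abs,
              abs_of_nonneg (mul_nonneg (Real.exp_pos (-y)).le h1)]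
            exact mul_le_of_le_one_left h1 h2
        · refine (ae_restrict_iff' measurableSet_Ioo).2 (ae_of_all _ fun y hy => ?_)
          exact mul_nonneg (Real.exp_pos _).le (Real.rpow_nonneg hy.1.le _)
    _ = ENNReal.ofReal (1/(4*H) * (c ^ (-(1/(2*H))) * lowerGamma (1/(2*H)) (c * T ^ (4*H)))) := by
        rw [← ENNReal.ofReal_mul hknn, hk, hα]
        ring_nf

/-- For `H ∈ (0,1)` and `R > 0`,
`∫₀^R dx ∫₀^x dy e^{-φ_H(x,y)} ≤ (1/(4H)) ∫₀^{π/4} φ_H(cos θ, sin θ)^{-1/(2H)}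
  γ(1/(2H), 2^{2H} R^{4H} φ_H(cos θ, sin θ)) dθ`. -/
theorem polar_bound (H R : ℝ) (hH : H ∈ Ioo (0:ℝ) 1) (hR : 0 < R) :
    (∫⁻ x in Ioc (0:ℝ) R, ∫⁻ y in Ioc (0:ℝ) x, ENNReal.ofReal (Real.exp (-phi H x y))) ≤
      ENNReal.ofReal (1 / (4 * H)) *
        ∫⁻ θ in Ioo (0:ℝ) (π / 4),
          ENNReal.ofReal ((phi H (Real.cos θ) (Real.sin θ)) ^ (-(1 / (2 * H))) *
            lowerGamma (1 / (2 * H))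
              ((2:ℝ) ^ (2 * H) * R ^ (4 * H) * phi H (Real.cos θ) (Real.sin θ))) := by
  obtain ⟨hH0, hH1⟩ := hH
  set T : ℝ := Real.sqrt 2 * R with hTdef
  have hT : 0 < T := by positivity
  set f : ℝ × ℝ → ENNReal := fun p => ENNReal.ofReal (Real.exp (-phi H p.1 p.2)) with hfdef
  set V : Set (ℝ × ℝ) := {p | 0 < p.2 ∧ p.2 ≤ p.1} with hVdef
  have hVmeas : MeasurableSet V :=
    (measurableSet_lt measurable_const measurable_snd).inter
      (measurableSet_le measurable_snd measurable_fst)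
  set S : Set (ℝ × ℝ) := Ioo 0 T ×ˢ Ioo 0 (π/4) with hSdef
  have hSmeas : MeasurableSet S := measurableSet_Ioo.prod measurableSet_Ioo
  -- continuity of phi
  have h2H : (0:ℝ) ≤ 2*H := by linarith
  have hphicont : Continuous fun p : ℝ × ℝ => phi H p.1 p.2 := by
    have c1 : Continuous fun p : ℝ × ℝ => p.1 ^ (2*H) :=
      (Real.continuous_rpow_const h2H).comp continuous_fst
    have c2 : Continuous fun p : ℝ × ℝ => p.2 ^ (2*H) :=
      (Real.continuous_rpow_const h2H).comp continuous_snd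
    have c3 : Continuous fun p : ℝ × ℝ => |p.1 - p.2| ^ (2*H) :=
      (Real.continuous_rpow_const h2H).comp ((continuous_fst.sub continuous_snd).abs)
    exact (c1.mul c2).sub (continuous_const.mul (((c1.add c2).sub c3).pow 2))
  have hfm : Measurable f :=
    ENNReal.measurable_ofReal.comp (Real.continuous_exp.comp hphicont.neg).measurable
  -- Step 1 : iterated integral = integral over the region
  have hre : ∀ (A : Set ℝ), MeasurableSet A →
      ((volume : Measure ℝ).restrict A).prod (volume : Measure ℝ) =
        (volume : Measure (ℝ × ℝ)).restrict (A ×ˢ univ) := by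
    intro A hA
    calc ((volume : Measure ℝ).restrict A).prod (volume : Measure ℝ)
        = ((volume : Measure ℝ).restrict A).prod ((volume : Measure ℝ).restrict univ) := by
          rw [Measure.restrict_univ]
      _ = ((volume : Measure ℝ).prod volume).restrict (A ×ˢ univ) := Measure.prod_restrict _ _
      _ = (volume : Measure (ℝ × ℝ)).restrict (A ×ˢ univ) := rfl
  have step1 : (∫⁻ x in Ioc (0:ℝ) R, ∫⁻ y in Ioc (0:ℝ) x, ENNReal.ofReal (Real.exp (-phi H x y)))
      = ∫⁻ p in (Ioc (0:ℝ) R ×ˢ (univ : Set ℝ)) ∩ V, f p := by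
    have hind : Measurable (V.indicator f) := hfm.indicator hVmeas
    calc (∫⁻ x in Ioc (0:ℝ) R, ∫⁻ y in Ioc (0:ℝ) x, ENNReal.ofReal (Real.exp (-phi H x y)))
        = ∫⁻ x in Ioc (0:ℝ) R, ∫⁻ y, V.indicator f (x, y) := by
          refine lintegral_congr fun x => ?_
          have : ∀ y : ℝ, V.indicator f (x, y) = (Ioc (0:ℝ) x).indicator (fun y => f (x, y)) y := by
            intro y
            by_cases h : y ∈ Ioc (0:ℝ) x
            · rw [Set.indicator_of_mem h, Set.indicator_of_mem]
              exact ⟨h.1, h.2⟩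
            · rw [Set.indicator_of_notMem h, Set.indicator_of_notMem]
              intro hc
              exact h ⟨hc.1, hc.2⟩
          simp_rw [this]
          rw [lintegral_indicator measurableSet_Ioc]
      _ = ∫⁻ p in Ioc (0:ℝ) R ×ˢ (univ : Set ℝ), V.indicator f p := by
          rw [← hre _ measurableSet_Ioc, lintegral_prod _ hind.aemeasurable]
      _ = ∫⁻ p in (Ioc (0:ℝ) R ×ˢ (univ : Set ℝ)) ∩ V, f p := by
          rw [lintegral_indicator hVmeas, Measure.restrict_restrict hVmeas, inter_comm]
  -- Step 2 : region inclusion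
  have hsub : (Ioc (0:ℝ) R ×ˢ (univ : Set ℝ)) ∩ V ⊆
      (polarCoord.symm '' S) ∪ {p : ℝ × ℝ | p.1 = p.2} := by
    rintro ⟨x, y⟩ ⟨⟨hx, -⟩, hy0, hyx⟩
    simp only [mem_Ioc] at hx
    rcases eq_or_lt_of_le hyx with heq | hlt
    · exact Or.inr heq.symm
    · left
      have hx0 : 0 < x := hx.1
      have hden : Real.sqrt (1 + (y/x)^2) = Real.sqrt (x^2 + y^2) / x := by
        rw [show 1 + (y/x)^2 = (x^2 + y^2)/x^2 by field_simp,
          Real.sqrt_div (by positivity), Real.sqrt_sq hx0.le]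
      have hrpos : 0 < Real.sqrt (x^2 + y^2) := Real.sqrt_pos.2 (by positivity)
      refine ⟨(Real.sqrt (x^2 + y^2), Real.arctan (y/x)), ⟨⟨hrpos, ?_⟩, ?_, ?_⟩, ?_⟩
      · rw [hTdef, show Real.sqrt 2 * R = Real.sqrt (2 * R^2) by
          rw [Real.sqrt_mul (by norm_num : (0:ℝ) ≤ 2), Real.sqrt_sq hR.le]]
        exact Real.sqrt_lt_sqrt (by positivity) (by nlinarith [hx.2])
      · rw [show (0:ℝ) = Real.arctan 0 by rw [Real.arctan_zero]]
        exact Real.arctan_strictMono (by positivity)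
      · rw [show π/4 = Real.arctan 1 by rw [Real.arctan_one]]
        exact Real.arctan_strictMono ((div_lt_one hx0).2 hlt)
      · rw [polarCoord_symm_apply]
        simp only [Real.cos_arctan, Real.sin_arctan, hden]
        have hne : Real.sqrt (x^2 + y^2) ≠ 0 := hrpos.ne'
        rw [Prod.ext_iff]
        constructor <;> field_simp
  -- Step 3 : diagonal is null
  have hdiag : (volume : Measure (ℝ × ℝ)) {p : ℝ × ℝ | p.1 = p.2} = 0 := by
    have hset : {p : ℝ × ℝ | p.1 = p.2} =
        (LinearMap.ker (LinearMap.fst ℝ ℝ ℝ - LinearMap.snd ℝ ℝ ℝ) : Set (ℝ × ℝ)) := by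
      ext p
      simp [LinearMap.mem_ker, sub_eq_zero]
    rw [hset]
    apply Measure.addHaar_submodule
    rw [Ne, LinearMap.ker_eq_top]
    intro h
    have := DFunLike.congr_fun h ((1:ℝ), (0:ℝ))
    simp at this
  -- Step 4 : change of variables on S
  set Bmap : ℝ × ℝ → (ℝ × ℝ) →L[ℝ] (ℝ × ℝ) := fun p =>
    LinearMap.toContinuousLinearMap (Matrix.toLin (Module.Basis.finTwoProd ℝ) (Module.Basis.finTwoProd ℝ)
      !![Real.cos p.2, -p.1 * Real.sin p.2; Real.sin p.2, p.1 * Real.cos p.2]) with hBmap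
  have hBdet : ∀ p : ℝ × ℝ, (Bmap p).det = p.1 := by
    intro p
    conv_rhs => rw [← one_mul p.1, ← Real.cos_sq_add_sin_sq p.2]
    simp only [hBmap, neg_mul, LinearMap.det_toContinuousLinearMap, LinearMap.det_toLin,
      Matrix.det_fin_two_of, sub_neg_eq_add]
    ring
  have hfd : ∀ p ∈ S, HasFDerivWithinAt polarCoord.symm (Bmap p) S p := fun p _ =>
    (hasFDerivAt_polarCoord_symm p).hasFDerivWithinAt
  have hStarget : S ⊆ polarCoord.symm.source := by
    rintro ⟨r, θ⟩ ⟨hr, hθ⟩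
    refine ⟨hr.1, hθ.1.trans' (by linarith [pi_pos]), hθ.2.trans_le (by linarith [pi_pos])⟩
  have hinj : InjOn polarCoord.symm S := polarCoord.symm.injOn.mono hStarget
  have step4 : ∫⁻ p in polarCoord.symm '' S, f p =
      ∫⁻ p in S, ENNReal.ofReal |(Bmap p).det| * f (polarCoord.symm p) :=
    lintegral_image_eq_lintegral_abs_det_fderiv_mul volume hSmeas hfd hinj f
  -- Step 5 : pointwise rewriting on S
  set G : ℝ × ℝ → ENNReal := fun p =>
    ENNReal.ofReal (p.1 * Real.exp (-(p.1 ^ (4*H) * phi H (Real.cos p.2) (Real.sin p.2)))) with hGdef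
  have step5 : ∫⁻ p in S, ENNReal.ofReal |(Bmap p).det| * f (polarCoord.symm p) =
      ∫⁻ p in S, G p := by
    refine setLIntegral_congr_fun hSmeas ?_
    rintro ⟨r, θ⟩ ⟨hr, hθ⟩
    have hθ2 : θ < π/2 := hθ.2.trans (by linarith [pi_pos])
    have hcos : 0 ≤ Real.cos θ := Real.cos_nonneg_of_mem_Icc ⟨by linarith [hθ.1, pi_pos], hθ2.le⟩
    have hsin : 0 ≤ Real.sin θ := Real.sin_nonneg_of_nonneg_of_le_pi hθ.1.le
      (by linarith [pi_pos, hθ2])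
    show ENNReal.ofReal |(Bmap (r, θ)).det| * f (polarCoord.symm (r, θ)) = G (r, θ)
    rw [hBdet, abs_of_pos hr.1, polarCoord_symm_apply]
    show ENNReal.ofReal r * ENNReal.ofReal (Real.exp (-phi H (r * Real.cos θ) (r * Real.sin θ)))
      = ENNReal.ofReal (r * Real.exp (-(r ^ (4*H) * phi H (Real.cos θ) (Real.sin θ))))
    rw [phi_homog H hr.1 hcos hsin, ← ENNReal.ofReal_mul hr.1.le]
  -- Step 6 : Tonelli
  have hGm : Measurable G := by
    have h4H : (0:ℝ) ≤ 4*H := by linarith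
    have c1 : Continuous fun p : ℝ × ℝ => p.1 ^ (4*H) :=
      (Real.continuous_rpow_const h4H).comp continuous_fst
    have c2 : Continuous fun p : ℝ × ℝ => phi H (Real.cos p.2) (Real.sin p.2) :=
      hphicont.comp ((Real.continuous_cos.comp continuous_snd).prodMk
        (Real.continuous_sin.comp continuous_snd))
    exact ENNReal.measurable_ofReal.comp
      (continuous_fst.mul (Real.continuous_exp.comp (c1.mul c2).neg)).measurable
  have hre2 : (volume : Measure (ℝ × ℝ)).restrict S =
      ((volume : Measure ℝ).restrict (Ioo 0 T)).prod ((volume : Measure ℝ).restrict (Ioo 0 (π/4))) := by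
    rw [Measure.prod_restrict]; rfl
  have step6 : ∫⁻ p in S, G p = ∫⁻ θ in Ioo (0:ℝ) (π/4), ∫⁻ r in Ioo (0:ℝ) T, G (r, θ) := by
    rw [hre2]
    exact lintegral_prod_symm G hGm.aemeasurable
  -- Step 7 : the radial integral
  have hT4 : T ^ (4*H) = 2 ^ (2*H) * R ^ (4*H) := by
    rw [hTdef, Real.mul_rpow (Real.sqrt_nonneg 2) hR.le,
      show Real.sqrt 2 = (2:ℝ) ^ ((1:ℝ)/2) from Real.sqrt_eq_rpow 2,
      ← Real.rpow_mul (by norm_num : (0:ℝ) ≤ 2), show (1:ℝ)/2*(4*H) = 2*H by ring]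
  have step7 : ∫⁻ θ in Ioo (0:ℝ) (π/4), ∫⁻ r in Ioo (0:ℝ) T, G (r, θ) =
      ∫⁻ θ in Ioo (0:ℝ) (π/4), ENNReal.ofReal (1/(4*H) *
        ((phi H (Real.cos θ) (Real.sin θ)) ^ (-(1/(2*H))) *
          lowerGamma (1/(2*H)) ((2:ℝ) ^ (2*H) * R ^ (4*H) * phi H (Real.cos θ) (Real.sin θ)))) := by
    refine setLIntegral_congr_fun measurableSet_Ioo (fun θ hθ => ?_)
    have hsinpos : 0 < Real.sin θ := Real.sin_pos_of_pos_of_lt_pi hθ.1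
      (by linarith [pi_pos, hθ.2])
    have hsincos : Real.sin θ < Real.cos θ := by
      have h1 : Real.sin θ < Real.sin (π/2 - θ) := by
        apply Real.strictMonoOn_sin ⟨by linarith [pi_pos, hθ.1], by linarith [pi_pos, hθ.2]⟩
          ⟨by linarith [pi_pos, hθ.2], by linarith [hθ.1]⟩ (by linarith [hθ.2, pi_pos])
      rwa [Real.sin_pi_div_two_sub] at h1
    have hc : 0 < phi H (Real.cos θ) (Real.sin θ) := phi_pos hH0 hH1 hsinpos hsincos
    have := radial_integral (c := phi H (Real.cos θ) (Real.sin θ)) (T := T) hH0 hH1 hc hT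
    simp only [hGdef]
    rw [this, hT4]
    ring_nf
  -- Step 8 : pull out the constant
  have step8 : ∫⁻ θ in Ioo (0:ℝ) (π/4), ENNReal.ofReal (1/(4*H) *
        ((phi H (Real.cos θ) (Real.sin θ)) ^ (-(1/(2*H))) *
          lowerGamma (1/(2*H)) ((2:ℝ) ^ (2*H) * R ^ (4*H) * phi H (Real.cos θ) (Real.sin θ)))) =
      ENNReal.ofReal (1/(4*H)) * ∫⁻ θ in Ioo (0:ℝ) (π/4),
        ENNReal.ofReal ((phi H (Real.cos θ) (Real.sin θ)) ^ (-(1/(2*H))) *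
          lowerGamma (1/(2*H)) ((2:ℝ) ^ (2*H) * R ^ (4*H) * phi H (Real.cos θ) (Real.sin θ))) := by
    rw [← lintegral_const_mul' _ _ ENNReal.ofReal_ne_top]
    refine lintegral_congr fun θ => ?_
    rw [ENNReal.ofReal_mul (by positivity)]
  -- assemble
  calc (∫⁻ x in Ioc (0:ℝ) R, ∫⁻ y in Ioc (0:ℝ) x, ENNReal.ofReal (Real.exp (-phi H x y)))
      = ∫⁻ p in (Ioc (0:ℝ) R ×ˢ (univ : Set ℝ)) ∩ V, f p := step1
    _ ≤ ∫⁻ p in (polarCoord.symm '' S) ∪ {p : ℝ × ℝ | p.1 = p.2}, f p :=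
        lintegral_mono_set hsub
    _ ≤ (∫⁻ p in polarCoord.symm '' S, f p) + ∫⁻ p in {p : ℝ × ℝ | p.1 = p.2}, f p :=
        lintegral_union_le _ _ _
    _ = ∫⁻ p in polarCoord.symm '' S, f p := by
        rw [setLIntegral_measure_zero _ _ hdiag, add_zero]
    _ = ∫⁻ p in S, G p := by rw [step4, step5]
    _ = _ := by rw [step6, step7, step8]
end

section
/- Let d ≥ 1 be an integer and let H1, H2 ∈ (0,1) satisfy d < 1/H1 + 1/H2. Then the integral ∫₀¹ dt ∫₀^t dt' ∫₀¹ ds ∫₀^s ds' ( φ_{H1}(t, t') + φ_{H2}(s, s') )^{−d/2} is finite. -/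
open MeasureTheory Set

/- aux -/
lemma mul4_le {a b c d A B C D : ℝ} (ha : 0 < a) (hb : 0 < b) (hc : 0 < c) (hd : 0 < d)
    (hA : a ≤ A) (hB : b ≤ B) (hC : c ≤ C) (hD : d ≤ D) : a*b*c*d ≤ A*B*C*D := by
  have hA0 : 0 < A := ha.trans_le hA
  have hB0 : 0 < B := hb.trans_le hB
  have hC0 : 0 < C := hc.trans_le hC
  have h1 : a*b ≤ A*B := mul_le_mul hA hB hb.le hA0.le
  have h2 : a*b*c ≤ A*B*C := mul_le_mul h1 hC hc.le (mul_pos hA0 hB0).le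
  exact mul_le_mul h2 hD hd.le (mul_pos (mul_pos hA0 hB0) hC0).le

lemma quant_subadd {H v w : ℝ} (hH0 : 0 < H) (hH1 : H < 1) (hv : 0 < v) (hvw : v ≤ w) :
    (v + w) ^ H ≤ w ^ H + H * v ^ H := by
  have hw : 0 < w := hv.trans_le hvw
  have h1 : (v + w) ^ H = w ^ H * (1 + v / w) ^ H := by
    rw [← Real.mul_rpow hw.le (by positivity)]
    congr 1
    field_simp
    ring
  have hvw0 : (0:ℝ) ≤ v / w := by positivity
  have h2 : (1 + v / w) ^ H ≤ 1 + H * (v / w) :=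
    rpow_one_add_le_one_add_mul_self (by linarith) hH0.le hH1.le
  have h3 : w ^ H * (1 + H * (v / w)) = w ^ H + H * (v * w ^ (H - 1)) := by
    rw [Real.rpow_sub hw, Real.rpow_one]
    field_simp
  have h4 : w ^ (H - 1) ≤ v ^ (H - 1) :=
    Real.rpow_le_rpow_of_nonpos hv hvw (by linarith)
  have h5 : v * v ^ (H - 1) = v ^ H := by
    nth_rewrite 1 [← Real.rpow_one v]
    rw [← Real.rpow_add hv]; ring_nf
  calc (v + w) ^ H ≤ w ^ H * (1 + H * (v / w)) := by
        rw [h1]; exact mul_le_mul_of_nonneg_left h2 (Real.rpow_nonneg hw.le H)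
    _ = w ^ H + H * (v * w ^ (H - 1)) := h3
    _ ≤ w ^ H + H * v ^ H := by
        have : v * w ^ (H - 1) ≤ v ^ H := by
          rw [← h5]; exact mul_le_mul_of_nonneg_left h4 hv.le
        nlinarith

lemma phi_lb {H u v : ℝ} (hH0 : 0 < H) (hH1 : H < 1) (hv : 0 < v) (hvu : v < u) :
    (1 - H)/4 * (v ^ (2 * H) * (u - v) ^ (2 * H)) ≤ phi H u v := by
  have hw0 : 0 < u - v := sub_pos.2 hvu
  have hu : 0 < u := hv.trans hvu
  have habs : |u - v| = u - v := abs_of_pos hw0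
  have sq : ∀ r : ℝ, 0 < r → r ^ (2 * H) = (r ^ H) ^ 2 := by
    intro r hr
    rw [mul_comm, Real.rpow_mul hr.le, ← Real.rpow_natCast (r ^ H) 2]
    norm_num
  set x := u ^ H with hxd
  set y := v ^ H with hyd
  set z := (u - v) ^ H with hzd
  have hx : 0 < x := Real.rpow_pos_of_pos hu H
  have hy : 0 < y := Real.rpow_pos_of_pos hv H
  have hz : 0 < z := Real.rpow_pos_of_pos hw0 H
  have hyx : y ≤ x := Real.rpow_le_rpow hv.le hvu.le hH0.le
  have hzx : z ≤ x := Real.rpow_le_rpow hw0.le (by linarith) hH0.le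
  have hkey : (1 - H) * (y ^ 2 * z ^ 2) ≤ (y + z - x) * (x + z - y) * (x + y - z) * (x + y + z) := by
    have hH1' : 0 < 1 - H := by linarith
    rcases le_total v (u - v) with hc | hc
    · have hsub : x ≤ z + H * y := by
        have := quant_subadd hH0 hH1 hv hc
        rwa [add_sub_cancel] at this
      have hA : (1 - H) * y ≤ y + z - x := by nlinarith
      have h6 : (1 - H) * y * z * y * z ≤ (y + z - x) * (x + z - y) * (x + y - z) * (x + y + z) :=
        mul4_le (mul_pos hH1' hy) hz hy hz hA (by linarith) (by linarith) (by linarith)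
      nlinarith [h6]
    · have hsub : x ≤ y + H * z := by
        have := quant_subadd hH0 hH1 hw0 hc
        rwa [sub_add_cancel] at this
      have hA : (1 - H) * z ≤ y + z - x := by nlinarith
      have h6 : (1 - H) * z * z * y * y ≤ (y + z - x) * (x + z - y) * (x + y - z) * (x + y + z) :=
        mul4_le (mul_pos hH1' hz) hz hy hy hA (by linarith) (by linarith) (by linarith)
      nlinarith [h6]
  have e1 := sq u hu
  have e2 := sq v hv
  have e3 := sq (u - v) hw0
  unfold phi
  rw [habs, e1, e2, e3, ← hxd, ← hyd, ← hzd]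
  nlinarith [hkey]


lemma lint_rpow {γ t : ℝ} (hγ0 : 0 < γ) (hγ1 : γ < 1) (ht : 0 < t) :
    ∫⁻ v in Ioc (0:ℝ) t, ENNReal.ofReal (v ^ (-γ)) = ENNReal.ofReal (t ^ (1-γ) / (1-γ)) := by
  have hint : IntegrableOn (fun v : ℝ => v ^ (-γ)) (Ioc 0 t) :=
    (intervalIntegral.intervalIntegrable_rpow' (by linarith)).1
  have nn : 0 ≤ᵐ[volume.restrict (Ioc (0:ℝ) t)] fun v : ℝ => v ^ (-γ) := by
    filter_upwards [ae_restrict_mem measurableSet_Ioc] with v hv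
      using Real.rpow_nonneg hv.1.le _
  rw [← ofReal_integral_eq_lintegral_ofReal hint nn]
  congr 1
  calc ∫ v in Ioc (0:ℝ) t, v ^ (-γ) = ∫ v in (0:ℝ)..t, v ^ (-γ) :=
        (intervalIntegral.integral_of_le ht.le).symm
    _ = (t ^ (-γ+1) - (0:ℝ) ^ (-γ+1)) / (-γ+1) := integral_rpow (Or.inl (by linarith))
    _ = t ^ (1-γ) / (1-γ) := by
        rw [Real.zero_rpow (by intro h; linarith : -γ+1 ≠ 0), show -γ+1 = 1-γ by ring]
        ring

lemma lint_rpow_sub {γ t : ℝ} (hγ0 : 0 < γ) (hγ1 : γ < 1) (ht : 0 < t) :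
    ∫⁻ v in Ioc (0:ℝ) t, ENNReal.ofReal ((t - v) ^ (-γ)) = ENNReal.ofReal (t ^ (1-γ) / (1-γ)) := by
  have h0 : IntervalIntegrable (fun v : ℝ => (t - v) ^ (-γ)) volume 0 t := by
    have := (intervalIntegral.intervalIntegrable_rpow' (a := 0) (b := t)
      (by linarith : (-1:ℝ) < -γ)).comp_sub_left t
    simpa using this.symm
  have hint : IntegrableOn (fun v : ℝ => (t - v) ^ (-γ)) (Ioc 0 t) := h0.1
  have nn : 0 ≤ᵐ[volume.restrict (Ioc (0:ℝ) t)] fun v : ℝ => (t - v) ^ (-γ) := by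
    filter_upwards [ae_restrict_mem measurableSet_Ioc] with v hv
      using Real.rpow_nonneg (by linarith [hv.2] : (0:ℝ) ≤ t - v) _
  rw [← ofReal_integral_eq_lintegral_ofReal hint nn]
  congr 1
  have hcs : (∫ v in (0:ℝ)..t, (t - v) ^ (-γ)) = ∫ v in (0:ℝ)..t, v ^ (-γ) := by
    have := intervalIntegral.integral_comp_sub_left (a := 0) (b := t) (fun x : ℝ => x ^ (-γ)) t
    simpa using this
  calc ∫ v in Ioc (0:ℝ) t, (t - v) ^ (-γ) = ∫ v in (0:ℝ)..t, (t - v) ^ (-γ) :=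
        (intervalIntegral.integral_of_le ht.le).symm
    _ = ∫ v in (0:ℝ)..t, v ^ (-γ) := hcs
    _ = (t ^ (-γ+1) - (0:ℝ) ^ (-γ+1)) / (-γ+1) := integral_rpow (Or.inl (by linarith))
    _ = t ^ (1-γ) / (1-γ) := by
        rw [Real.zero_rpow (by intro h; linarith : -γ+1 ≠ 0), show -γ+1 = 1-γ by ring]
        ring

lemma inner_bound {H β t : ℝ} (hH0 : 0 < H) (hβ : 0 < β) (hγ1 : 2*H*β < 1)
    {k : ℝ} (hk : 0 < k) (ht : 0 < t) :
    ∫⁻ v in Ioc (0:ℝ) t, ENNReal.ofReal ((k * (v ^ (2*H) * (t - v) ^ (2*H))) ^ (-β))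
      ≤ ENNReal.ofReal ((k ^ (-β) * (2 ^ (1 + 2*H*β) / (1 - 2*H*β))) * t ^ (1 - 2*(2*H*β))) := by
  set γ := 2*H*β with hγd
  have hγ0 : 0 < γ := by positivity
  have hc0 : (0:ℝ) ≤ k ^ (-β) * (t/2) ^ (-γ) := by positivity
  have gmeas : Measurable (fun v : ℝ =>
      ENNReal.ofReal (k ^ (-β) * (t/2) ^ (-γ)) *
        (ENNReal.ofReal (v ^ (-γ)) + ENNReal.ofReal ((t - v) ^ (-γ)))) := by
    fun_prop
  have ptw : ∀ v ∈ Ioc (0:ℝ) t,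
      ENNReal.ofReal ((k * (v ^ (2*H) * (t - v) ^ (2*H))) ^ (-β)) ≤
      ENNReal.ofReal (k ^ (-β) * (t/2) ^ (-γ)) *
        (ENNReal.ofReal (v ^ (-γ)) + ENNReal.ofReal ((t - v) ^ (-γ))) := by
    intro v hv
    have hv0 : 0 < v := hv.1
    rw [← ENNReal.ofReal_add (Real.rpow_nonneg hv0.le _)
        (Real.rpow_nonneg (by linarith [hv.2] : (0:ℝ) ≤ t - v) _),
      ← ENNReal.ofReal_mul hc0]
    apply ENNReal.ofReal_le_ofReal
    rcases eq_or_lt_of_le hv.2 with he | hvt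
    · rw [he, sub_self, Real.zero_rpow (by positivity : (0:ℝ) < 2*H).ne', mul_zero, mul_zero,
        Real.zero_rpow (neg_ne_zero.2 hβ.ne')]
      positivity
    · have hw0 : 0 < t - v := by linarith
      have hrw : (k * (v ^ (2*H) * (t - v) ^ (2*H))) ^ (-β)
          = k ^ (-β) * (v ^ (-γ) * (t - v) ^ (-γ)) := by
        rw [Real.mul_rpow hk.le (by positivity),
          Real.mul_rpow (Real.rpow_nonneg hv0.le _) (Real.rpow_nonneg hw0.le _),
          ← Real.rpow_mul hv0.le, ← Real.rpow_mul hw0.le,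
          show 2*H*(-β) = -γ by rw [hγd]; ring]
      rw [hrw]
      have hvm : (0:ℝ) ≤ v ^ (-γ) := Real.rpow_nonneg hv0.le _
      have hwm : (0:ℝ) ≤ (t - v) ^ (-γ) := Real.rpow_nonneg hw0.le _
      have hkm : (0:ℝ) ≤ k ^ (-β) := Real.rpow_nonneg hk.le _
      have ht2 : (0:ℝ) < t/2 := by linarith
      have core : v ^ (-γ) * (t - v) ^ (-γ) ≤ (t/2) ^ (-γ) * (v ^ (-γ) + (t - v) ^ (-γ)) := by
        rcases le_total v (t/2) with hc | hc
        · have h1 : (t - v) ^ (-γ) ≤ (t/2) ^ (-γ) :=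
            Real.rpow_le_rpow_of_nonpos ht2 (by linarith) (by linarith)
          nlinarith [Real.rpow_nonneg ht2.le (-γ)]
        · have h1 : v ^ (-γ) ≤ (t/2) ^ (-γ) :=
            Real.rpow_le_rpow_of_nonpos ht2 hc (by linarith)
          nlinarith [Real.rpow_nonneg ht2.le (-γ)]
      calc k ^ (-β) * (v ^ (-γ) * (t - v) ^ (-γ))
          ≤ k ^ (-β) * ((t/2) ^ (-γ) * (v ^ (-γ) + (t - v) ^ (-γ))) :=
            mul_le_mul_of_nonneg_left core hkm
        _ = k ^ (-β) * (t/2) ^ (-γ) * (v ^ (-γ) + (t - v) ^ (-γ)) := by ring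
  have hhalf : (t/2) ^ (-γ) = t ^ (-γ) * (2:ℝ) ^ γ := by
    rw [div_eq_mul_inv, Real.mul_rpow ht.le (by norm_num),
      Real.inv_rpow (by norm_num), ← Real.rpow_neg (by norm_num), neg_neg]
  have e1 : (2:ℝ) ^ (1 + γ) = 2 * 2 ^ γ := by
    rw [Real.rpow_add (by norm_num), Real.rpow_one]
  have e2 : t ^ (-γ) * t ^ (1 - γ) = t ^ (1 - 2*γ) := by
    rw [← Real.rpow_add ht, show -γ + (1 - γ) = 1 - 2*γ by ring]
  calc ∫⁻ v in Ioc (0:ℝ) t, ENNReal.ofReal ((k * (v ^ (2*H) * (t - v) ^ (2*H))) ^ (-β))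
      ≤ ∫⁻ v in Ioc (0:ℝ) t, ENNReal.ofReal (k ^ (-β) * (t/2) ^ (-γ)) *
          (ENNReal.ofReal (v ^ (-γ)) + ENNReal.ofReal ((t - v) ^ (-γ))) :=
        setLIntegral_mono gmeas ptw
    _ = ENNReal.ofReal (k ^ (-β) * (t/2) ^ (-γ)) *
          ((∫⁻ v in Ioc (0:ℝ) t, ENNReal.ofReal (v ^ (-γ))) +
           (∫⁻ v in Ioc (0:ℝ) t, ENNReal.ofReal ((t - v) ^ (-γ)))) := by
        rw [lintegral_const_mul' _ _ ENNReal.ofReal_ne_top, lintegral_add_left (by fun_prop)]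
    _ = ENNReal.ofReal (k ^ (-β) * (t/2) ^ (-γ)) *
          (ENNReal.ofReal (t ^ (1-γ) / (1-γ)) + ENNReal.ofReal (t ^ (1-γ) / (1-γ))) := by
        rw [lint_rpow hγ0 hγ1 ht, lint_rpow_sub hγ0 hγ1 ht]
    _ = ENNReal.ofReal ((k ^ (-β) * (t/2) ^ (-γ)) * (t ^ (1-γ) / (1-γ) + t ^ (1-γ) / (1-γ))) := by
        have hE : (0:ℝ) ≤ t ^ (1-γ) / (1-γ) :=
          div_nonneg (Real.rpow_nonneg ht.le _) (by linarith)
        rw [← ENNReal.ofReal_add hE hE, ← ENNReal.ofReal_mul hc0]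
    _ = ENNReal.ofReal ((k ^ (-β) * (2 ^ (1 + γ) / (1 - γ))) * t ^ (1 - 2*γ)) := by
        congr 1
        rw [hhalf, e1, ← e2]
        ring

lemma outer_fin {c r : ℝ} (hr : -1 < r) :
    ∫⁻ t in Ioc (0:ℝ) 1, ENNReal.ofReal (c * t ^ r) < ⊤ := by
  have hint : IntegrableOn (fun t : ℝ => c * t ^ r) (Ioc 0 1) :=
    ((intervalIntegral.intervalIntegrable_rpow' hr).1).const_mul c
  exact hint.lintegral_lt_top

/-- For an integer `d ≥ 1` and `H1, H2 ∈ (0,1)` with `d < 1/H1 + 1/H2`,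
`∫₀¹ dt ∫₀^t dt' ∫₀¹ ds ∫₀^s ds' (φ_{H1}(t,t') + φ_{H2}(s,s'))^{-d/2} < ∞`. -/
theorem fourfold_integral_finite (d : ℕ) (hd : 1 ≤ d) (H1 H2 : ℝ)
    (h1 : H1 ∈ Ioo (0:ℝ) 1) (h2 : H2 ∈ Ioo (0:ℝ) 1)
    (hcond : (d : ℝ) < 1 / H1 + 1 / H2) :
    (∫⁻ t in Ioc (0:ℝ) 1, ∫⁻ t' in Ioc (0:ℝ) t, ∫⁻ s in Ioc (0:ℝ) 1, ∫⁻ s' in Ioc (0:ℝ) s,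
        ENNReal.ofReal ((phi H1 t t' + phi H2 s s') ^ (-(d : ℝ) / 2))) < ⊤ := by
  obtain ⟨hH10, hH11⟩ := h1
  obtain ⟨hH20, hH21⟩ := h2
  have hd0 : (0:ℝ) < d := by exact_mod_cast Nat.lt_of_lt_of_le Nat.zero_lt_one hd
  have hsum : 1 < 1/((d:ℝ)*H1) + 1/((d:ℝ)*H2) := by
    have he : 1/((d:ℝ)*H1) + 1/((d:ℝ)*H2) = (1/H1 + 1/H2)/d := by
      field_simp
    rw [he, lt_div_iff₀ hd0, one_mul]
    exact hcond
  have hmaxmin : max 0 (1 - 1/((d:ℝ)*H2)) < min 1 (1/((d:ℝ)*H1)) := by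
    apply max_lt
    · exact lt_min one_pos (by positivity)
    · apply lt_min
      · have : (0:ℝ) < 1/((d:ℝ)*H2) := by positivity
        linarith
      · linarith
  obtain ⟨a, hal, har⟩ := exists_between hmaxmin
  have ha0 : 0 < a := (le_max_left 0 _).trans_lt hal
  have ha1 : a < 1 := har.trans_le (min_le_left _ _)
  have haH1 : a * ((d:ℝ)*H1) < 1 :=
    (lt_div_iff₀ (by positivity)).1 (har.trans_le (min_le_right _ _))
  have haH2 : (1-a) * ((d:ℝ)*H2) < 1 := by
    have h' := (le_max_right 0 (1 - 1/((d:ℝ)*H2))).trans_lt hal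
    exact (lt_div_iff₀ (by positivity)).1 (by linarith)
  set β1 := a * d / 2 with hβ1d
  set β2 := (1-a) * d / 2 with hβ2d
  have hβ10 : 0 < β1 := div_pos (mul_pos ha0 hd0) two_pos
  have hβ20 : 0 < β2 := div_pos (mul_pos (by linarith) hd0) two_pos
  have hγ11 : 2*H1*β1 < 1 := by rw [hβ1d]; nlinarith [haH1]
  have hγ21 : 2*H2*β2 < 1 := by rw [hβ2d]; nlinarith [haH2]
  set k1 := (1 - H1)/4 with hk1d
  set k2 := (1 - H2)/4 with hk2d
  have hk1 : 0 < k1 := by rw [hk1d]; linarith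
  have hk2 : 0 < k2 := by rw [hk2d]; linarith
  -- pointwise bound
  have key : ∀ t t' s s' : ℝ, 0 < t' → t' < t → 0 < s' → s' < s →
      ENNReal.ofReal ((phi H1 t t' + phi H2 s s') ^ (-(d : ℝ) / 2)) ≤
        ENNReal.ofReal ((k1 * (t' ^ (2*H1) * (t - t') ^ (2*H1))) ^ (-β1)) *
        ENNReal.ofReal ((k2 * (s' ^ (2*H2) * (s - s') ^ (2*H2))) ^ (-β2)) := by
    intro t t' s s' ht'0 ht't hs'0 hs's
    set P := k1 * (t' ^ (2*H1) * (t - t') ^ (2*H1)) with hPd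
    set Q := k2 * (s' ^ (2*H2) * (s - s') ^ (2*H2)) with hQd
    have hP : 0 < P := by
      rw [hPd]
      exact mul_pos hk1 (mul_pos (Real.rpow_pos_of_pos ht'0 _)
        (Real.rpow_pos_of_pos (by linarith) _))
    have hQ : 0 < Q := by
      rw [hQd]
      exact mul_pos hk2 (mul_pos (Real.rpow_pos_of_pos hs'0 _)
        (Real.rpow_pos_of_pos (by linarith) _))
    have h1b : P ≤ phi H1 t t' := phi_lb hH10 hH11 ht'0 ht't
    have h2b : Q ≤ phi H2 s s' := phi_lb hH20 hH21 hs'0 hs's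
    have hφ1 : 0 < phi H1 t t' := hP.trans_le h1b
    have hφ2 : 0 < phi H2 s s' := hQ.trans_le h2b
    have hg : P ^ a * Q ^ (1-a) ≤ phi H1 t t' + phi H2 s s' := by
      have g1 : P ^ a ≤ (phi H1 t t') ^ a := Real.rpow_le_rpow hP.le h1b ha0.le
      have g2 : Q ^ (1-a) ≤ (phi H2 s s') ^ (1-a) :=
        Real.rpow_le_rpow hQ.le h2b (by linarith)
      have g3 : (phi H1 t t') ^ a * (phi H2 s s') ^ (1-a) ≤
          a * phi H1 t t' + (1-a) * phi H2 s s' :=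
        Real.geom_mean_le_arith_mean2_weighted ha0.le (by linarith) hφ1.le hφ2.le (by ring)
      have g4 : P ^ a * Q ^ (1-a) ≤ (phi H1 t t') ^ a * (phi H2 s s') ^ (1-a) :=
        mul_le_mul g1 g2 (Real.rpow_nonneg hQ.le _) (Real.rpow_nonneg hφ1.le _)
      have p1 : 0 ≤ (1-a) * phi H1 t t' := mul_nonneg (by linarith) hφ1.le
      have p2 : 0 ≤ a * phi H2 s s' := mul_nonneg ha0.le hφ2.le
      linarith [g3, g4]
    have hbase : 0 < P ^ a * Q ^ (1-a) :=
      mul_pos (Real.rpow_pos_of_pos hP _) (Real.rpow_pos_of_pos hQ _)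
    have h4 : (phi H1 t t' + phi H2 s s') ^ (-(d:ℝ)/2) ≤
        (P ^ a * Q ^ (1-a)) ^ (-(d:ℝ)/2) :=
      Real.rpow_le_rpow_of_nonpos hbase hg (by
        have : (0:ℝ) ≤ (d:ℝ)/2 := by positivity
        linarith)
    have h5 : (P ^ a * Q ^ (1-a)) ^ (-(d:ℝ)/2) = P ^ (-β1) * Q ^ (-β2) := by
      rw [Real.mul_rpow (Real.rpow_nonneg hP.le _) (Real.rpow_nonneg hQ.le _),
        ← Real.rpow_mul hP.le, ← Real.rpow_mul hQ.le,
        show a * (-(d:ℝ)/2) = -β1 by rw [hβ1d]; ring,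
        show (1-a) * (-(d:ℝ)/2) = -β2 by rw [hβ2d]; ring]
    calc ENNReal.ofReal ((phi H1 t t' + phi H2 s s') ^ (-(d : ℝ) / 2))
        ≤ ENNReal.ofReal (P ^ (-β1) * Q ^ (-β2)) :=
          ENNReal.ofReal_le_ofReal (h4.trans_eq h5)
      _ = ENNReal.ofReal (P ^ (-β1)) * ENNReal.ofReal (Q ^ (-β2)) :=
          ENNReal.ofReal_mul (Real.rpow_nonneg hP.le _)
  set C1 := k1 ^ (-β1) * (2 ^ (1 + 2*H1*β1) / (1 - 2*H1*β1)) with hC1d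
  set C2 := k2 ^ (-β2) * (2 ^ (1 + 2*H2*β2) / (1 - 2*H2*β2)) with hC2d
  set e1 := 1 - 2*(2*H1*β1) with he1d
  set e2 := 1 - 2*(2*H2*β2) with he2d
  set D1 := ∫⁻ t in Ioc (0:ℝ) 1, ENNReal.ofReal (C1 * t ^ e1) with hD1d
  set D2 := ∫⁻ s in Ioc (0:ℝ) 1, ENNReal.ofReal (C2 * s ^ e2) with hD2d
  have hγ10 : 0 < 2*H1*β1 := mul_pos (mul_pos two_pos hH10) hβ10
  have hγ20 : 0 < 2*H2*β2 := mul_pos (mul_pos two_pos hH20) hβ20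
  have hD1 : D1 < ⊤ := outer_fin (by rw [he1d]; linarith)
  have hD2 : D2 < ⊤ := outer_fin (by rw [he2d]; linarith)
  have step1 : ∀ t t' s : ℝ, 0 < t' → t' < t → 0 < s →
      ∫⁻ s' in Ioc (0:ℝ) s,
          ENNReal.ofReal ((phi H1 t t' + phi H2 s s') ^ (-(d : ℝ) / 2)) ≤
        ENNReal.ofReal ((k1 * (t' ^ (2*H1) * (t - t') ^ (2*H1))) ^ (-β1)) *
          ENNReal.ofReal (C2 * s ^ e2) := by
    intro t t' s ht'0 ht't hs0
    calc ∫⁻ s' in Ioc (0:ℝ) s,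
            ENNReal.ofReal ((phi H1 t t' + phi H2 s s') ^ (-(d : ℝ) / 2))
        = ∫⁻ s' in Ioo (0:ℝ) s,
            ENNReal.ofReal ((phi H1 t t' + phi H2 s s') ^ (-(d : ℝ) / 2)) :=
          (setLIntegral_congr Ioo_ae_eq_Ioc).symm
      _ ≤ ∫⁻ s' in Ioo (0:ℝ) s,
            ENNReal.ofReal ((k1 * (t' ^ (2*H1) * (t - t') ^ (2*H1))) ^ (-β1)) *
            ENNReal.ofReal ((k2 * (s' ^ (2*H2) * (s - s') ^ (2*H2))) ^ (-β2)) :=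
          setLIntegral_mono (by fun_prop) (fun s' hs' => key t t' s s' ht'0 ht't hs'.1 hs'.2)
      _ = ∫⁻ s' in Ioc (0:ℝ) s,
            ENNReal.ofReal ((k1 * (t' ^ (2*H1) * (t - t') ^ (2*H1))) ^ (-β1)) *
            ENNReal.ofReal ((k2 * (s' ^ (2*H2) * (s - s') ^ (2*H2))) ^ (-β2)) :=
          setLIntegral_congr Ioo_ae_eq_Ioc
      _ = ENNReal.ofReal ((k1 * (t' ^ (2*H1) * (t - t') ^ (2*H1))) ^ (-β1)) *
            ∫⁻ s' in Ioc (0:ℝ) s,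
              ENNReal.ofReal ((k2 * (s' ^ (2*H2) * (s - s') ^ (2*H2))) ^ (-β2)) :=
          lintegral_const_mul' _ _ ENNReal.ofReal_ne_top
      _ ≤ ENNReal.ofReal ((k1 * (t' ^ (2*H1) * (t - t') ^ (2*H1))) ^ (-β1)) *
            ENNReal.ofReal (C2 * s ^ e2) := by
          apply mul_le_mul_right
          rw [hC2d, he2d]
          exact inner_bound hH20 hβ20 hγ21 hk2 hs0
  have step2 : ∀ t t' : ℝ, 0 < t' → t' < t →
      ∫⁻ s in Ioc (0:ℝ) 1, ∫⁻ s' in Ioc (0:ℝ) s,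
          ENNReal.ofReal ((phi H1 t t' + phi H2 s s') ^ (-(d : ℝ) / 2)) ≤
        ENNReal.ofReal ((k1 * (t' ^ (2*H1) * (t - t') ^ (2*H1))) ^ (-β1)) * D2 := by
    intro t t' ht'0 ht't
    calc ∫⁻ s in Ioc (0:ℝ) 1, ∫⁻ s' in Ioc (0:ℝ) s,
            ENNReal.ofReal ((phi H1 t t' + phi H2 s s') ^ (-(d : ℝ) / 2))
        ≤ ∫⁻ s in Ioc (0:ℝ) 1,
            ENNReal.ofReal ((k1 * (t' ^ (2*H1) * (t - t') ^ (2*H1))) ^ (-β1)) *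
              ENNReal.ofReal (C2 * s ^ e2) :=
          setLIntegral_mono (by fun_prop) (fun s hs => step1 t t' s ht'0 ht't hs.1)
      _ = ENNReal.ofReal ((k1 * (t' ^ (2*H1) * (t - t') ^ (2*H1))) ^ (-β1)) * D2 := by
          rw [hD2d]
          exact lintegral_const_mul' _ _ ENNReal.ofReal_ne_top
  have step3 : ∀ t : ℝ, 0 < t →
      ∫⁻ t' in Ioc (0:ℝ) t, ∫⁻ s in Ioc (0:ℝ) 1, ∫⁻ s' in Ioc (0:ℝ) s,
          ENNReal.ofReal ((phi H1 t t' + phi H2 s s') ^ (-(d : ℝ) / 2)) ≤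
        ENNReal.ofReal (C1 * t ^ e1) * D2 := by
    intro t ht0
    calc ∫⁻ t' in Ioc (0:ℝ) t, ∫⁻ s in Ioc (0:ℝ) 1, ∫⁻ s' in Ioc (0:ℝ) s,
            ENNReal.ofReal ((phi H1 t t' + phi H2 s s') ^ (-(d : ℝ) / 2))
        = ∫⁻ t' in Ioo (0:ℝ) t, ∫⁻ s in Ioc (0:ℝ) 1, ∫⁻ s' in Ioc (0:ℝ) s,
            ENNReal.ofReal ((phi H1 t t' + phi H2 s s') ^ (-(d : ℝ) / 2)) :=
          (setLIntegral_congr Ioo_ae_eq_Ioc).symm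
      _ ≤ ∫⁻ t' in Ioo (0:ℝ) t,
            ENNReal.ofReal ((k1 * (t' ^ (2*H1) * (t - t') ^ (2*H1))) ^ (-β1)) * D2 :=
          setLIntegral_mono (by fun_prop) (fun t' ht' => step2 t t' ht'.1 ht'.2)
      _ = ∫⁻ t' in Ioc (0:ℝ) t,
            ENNReal.ofReal ((k1 * (t' ^ (2*H1) * (t - t') ^ (2*H1))) ^ (-β1)) * D2 :=
          setLIntegral_congr Ioo_ae_eq_Ioc
      _ = (∫⁻ t' in Ioc (0:ℝ) t,
            ENNReal.ofReal ((k1 * (t' ^ (2*H1) * (t - t') ^ (2*H1))) ^ (-β1))) * D2 :=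
          lintegral_mul_const' _ _ hD2.ne
      _ ≤ ENNReal.ofReal (C1 * t ^ e1) * D2 := by
          apply mul_le_mul_left
          rw [hC1d, he1d]
          exact inner_bound hH10 hβ10 hγ11 hk1 ht0
  calc (∫⁻ t in Ioc (0:ℝ) 1, ∫⁻ t' in Ioc (0:ℝ) t, ∫⁻ s in Ioc (0:ℝ) 1, ∫⁻ s' in Ioc (0:ℝ) s,
          ENNReal.ofReal ((phi H1 t t' + phi H2 s s') ^ (-(d : ℝ) / 2)))
      ≤ ∫⁻ t in Ioc (0:ℝ) 1, ENNReal.ofReal (C1 * t ^ e1) * D2 :=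
        setLIntegral_mono (by fun_prop) (fun t ht => step3 t ht.1)
    _ = D1 * D2 := by rw [hD1d]; exact lintegral_mul_const' _ _ hD2.ne
    _ < ⊤ := ENNReal.mul_lt_top hD1 hD2
end
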